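/- For the curvature tensor R of Lemma 2.1 (with R¹ = 0 and R² of constant sectional curvature +1) and a spacelike unit vector X with u-component of unit Euclidean length reduced to u_1 = 1, the kernel of J(X) is Span{X, V_1, ..., V_s, T_1} and has dimension s + 2, while the image of J(X) is Span{C_{2b}V_b − T_2, ..., C_{sb}V_b − T_s, V_2, ..., V_s} of dimension 2(s−1). -/
import Mathlib


open scoped BigOperators

/-- Basis of `ℝ^{3s}`: `(0, a) = U_a`, `(1, a) = V_a`, `(2, a) = T_a`. -/
abbrev BasisIdx (s : ℕ) := Fin 3 × Fin s

/-- The basis vectors `U_a`, `V_a`, `T_a` of `ℝ^{3s}`. -/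
def Uvec {s : ℕ} (a : Fin s) : BasisIdx s → ℝ := Pi.single ((0 : Fin 3), a) 1
def Vvec {s : ℕ} (a : Fin s) : BasisIdx s → ℝ := Pi.single ((1 : Fin 3), a) 1
def Tvec {s : ℕ} (a : Fin s) : BasisIdx s → ℝ := Pi.single ((2 : Fin 3), a) 1

/-- Components of the metric of Lemma 2.1: `g(U_a,U_b) = g_{ab}`,
`g(U_a,V_b) = g(V_b,U_a) = δ_{ab}`, `g(T_a,T_b) = -δ_{ab}`, all else zero. -/
def Gmat {s : ℕ} (gm : Fin s → Fin s → ℝ) : BasisIdx s → BasisIdx s → ℝ :=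
  fun x y =>
    if x.1 = 0 ∧ y.1 = 0 then gm x.2 y.2
    else if (x.1 = 0 ∧ y.1 = 1) ∨ (x.1 = 1 ∧ y.1 = 0) then (if x.2 = y.2 then 1 else 0)
    else if x.1 = 2 ∧ y.1 = 2 then (if x.2 = y.2 then (-1 : ℝ) else 0)
    else 0

/-- The bilinear form determined by the metric components. -/
def gBil {s : ℕ} (gm : Fin s → Fin s → ℝ) (X Y : BasisIdx s → ℝ) : ℝ :=
  ∑ p, ∑ q, X p * Gmat gm p q * Y q

/-- The quadrilinear extension of a component tensor to vectors. -/
def ext {s : ℕ} (F : BasisIdx s → BasisIdx s → BasisIdx s → BasisIdx s → ℝ)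
    (x y z w : BasisIdx s → ℝ) : ℝ :=
  ∑ p, ∑ q, ∑ r, ∑ t, x p * y q * z r * w t * F p q r t

/-- A (component-level) algebraic curvature tensor. -/
def IsACT {ι : Type*} (F : ι → ι → ι → ι → ℝ) : Prop :=
  (∀ x y z w, F x y z w = - F y x z w) ∧
  (∀ x y z w, F x y z w = F z w x y) ∧
  (∀ x y z w, F x y z w + F y z x w + F z x y w = 0)

/-- `R²_{abcd} = δ_{ad}δ_{bc} - δ_{ac}δ_{bd}`, constant sectional curvature `+1`. -/
def R2const (s : ℕ) : Fin s → Fin s → Fin s → Fin s → ℝ :=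
  fun a b c d =>
    (if a = d then (1 : ℝ) else 0) * (if b = c then (1 : ℝ) else 0) -
      (if a = c then (1 : ℝ) else 0) * (if b = d then (1 : ℝ) else 0)

/-- The tensor of Lemma 2.1: `R(U_a,U_b,U_c,U_d) = R¹_{abcd}`, components with
exactly one `T` index equal `R²_{abcd}` (replacing the `T` index by the
corresponding `U` index), all else zero. -/
def bigR {s : ℕ} (R1 R2 : Fin s → Fin s → Fin s → Fin s → ℝ) :
    BasisIdx s → BasisIdx s → BasisIdx s → BasisIdx s → ℝ :=
  fun x y z w =>
    if x.1 = 0 ∧ y.1 = 0 ∧ z.1 = 0 ∧ w.1 = 0 then R1 x.2 y.2 z.2 w.2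
    else if (x.1 = 2 ∧ y.1 = 0 ∧ z.1 = 0 ∧ w.1 = 0) ∨ (x.1 = 0 ∧ y.1 = 2 ∧ z.1 = 0 ∧ w.1 = 0) ∨
            (x.1 = 0 ∧ y.1 = 0 ∧ z.1 = 2 ∧ w.1 = 0) ∨ (x.1 = 0 ∧ y.1 = 0 ∧ z.1 = 0 ∧ w.1 = 2)
      then R2 x.2 y.2 z.2 w.2
    else 0

variable {s : ℕ}

lemma gBilV (gm : Fin s → Fin s → ℝ) (W : BasisIdx s → ℝ) (d : Fin s) :
    gBil gm W (Vvec d) = W (0,d) := by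
  unfold gBil Vvec
  simp [Pi.single_apply, mul_ite, Fintype.sum_prod_type, Fin.sum_univ_three, Gmat]

lemma gBilT (gm : Fin s → Fin s → ℝ) (W : BasisIdx s → ℝ) (d : Fin s) :
    gBil gm W (Tvec d) = - W (2,d) := by
  unfold gBil Tvec
  simp [Pi.single_apply, mul_ite, Fintype.sum_prod_type, Fin.sum_univ_three, Gmat]

lemma gBilU (gm : Fin s → Fin s → ℝ) (W : BasisIdx s → ℝ) (d : Fin s) :
    gBil gm W (Uvec d) = (∑ a, W (0,a) * gm a d) + W (1,d) := by
  unfold gBil Uvec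
  simp [Pi.single_apply, mul_ite, Fintype.sum_prod_type, Fin.sum_univ_three, Gmat]

lemma eq_of_gBil (gm : Fin s → Fin s → ℝ) (W W' : BasisIdx s → ℝ)
    (hU : ∀ d, gBil gm W (Uvec d) = gBil gm W' (Uvec d))
    (hV : ∀ d, gBil gm W (Vvec d) = gBil gm W' (Vvec d))
    (hT : ∀ d, gBil gm W (Tvec d) = gBil gm W' (Tvec d)) : W = W' := by
  funext p
  obtain ⟨j, a⟩ := p
  have h0 : W (0,a) = W' (0,a) := by
    have := hV a; rwa [gBilV, gBilV] at this
  have h2 : W (2,a) = W' (2,a) := by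
    have := hT a; rw [gBilT, gBilT] at this; linarith
  have h1 : W (1,a) = W' (1,a) := by
    have := hU a; rw [gBilU, gBilU] at this
    have hsum : (∑ b, W (0,b) * gm b a) = ∑ b, W' (0,b) * gm b a := by
      refine Finset.sum_congr rfl fun b _ => ?_
      have := hV b; rw [gBilV, gBilV] at this; rw [this]
    linarith
  fin_cases j <;> assumption

lemma bigR_antisym (p q r u : BasisIdx s) :
    bigR (fun _ _ _ _ => (0:ℝ)) (R2const s) p q r u
      = - bigR (fun _ _ _ _ => (0:ℝ)) (R2const s) q p r u := by
  obtain ⟨pj, pa⟩ := p; obtain ⟨qj, qa⟩ := q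
  fin_cases pj <;> fin_cases qj <;>
    simp [bigR, R2const] <;> split_ifs <;> ring

lemma ext_XX_zero (X z : BasisIdx s → ℝ) :
    ext (bigR (fun _ _ _ _ => (0:ℝ)) (R2const s)) X X X z = 0 := by
  unfold ext
  have key : ∀ A : BasisIdx s → BasisIdx s → ℝ, (∀ p q, A p q = - A q p) →
      (∑ p, ∑ q, X p * X q * A p q) = 0 := by
    intro A hA
    have e1 : (∑ p, ∑ q, X p * X q * A p q) = ∑ q, ∑ p, X p * X q * A p q :=
      Finset.sum_comm
    have e2 : (∑ q, ∑ p, X p * X q * A p q) = ∑ q, ∑ p, -(X q * X p * A q p) :=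
      Finset.sum_congr rfl fun q _ => Finset.sum_congr rfl fun p _ => by rw [hA p q]; ring
    have e3 : (∑ q, ∑ p, -(X q * X p * A q p)) = -∑ q, ∑ p, X q * X p * A q p := by
      simp only [Finset.sum_neg_distrib]
    linarith [e1, e2, e3]
  have : (∑ p, ∑ q, ∑ r, ∑ t, X p * X q * X r * z t *
      bigR (fun _ _ _ _ => (0:ℝ)) (R2const s) p q r t)
      = ∑ p, ∑ q, X p * X q * (∑ r, ∑ t, X r * z t *
        bigR (fun _ _ _ _ => (0:ℝ)) (R2const s) p q r t) := by
    refine Finset.sum_congr rfl fun p _ => Finset.sum_congr rfl fun q _ => ?_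
    rw [Finset.mul_sum]
    refine Finset.sum_congr rfl fun r _ => ?_
    rw [Finset.mul_sum]
    refine Finset.sum_congr rfl fun u _ => ?_
    ring
  rw [this]
  exact key _ (fun p q => by
    rw [← Finset.sum_neg_distrib]
    refine Finset.sum_congr rfl fun r _ => ?_
    rw [← Finset.sum_neg_distrib]
    refine Finset.sum_congr rfl fun u _ => ?_
    rw [bigR_antisym p q r u]; ring)

lemma ext_single_single (F : BasisIdx s → BasisIdx s → BasisIdx s → BasisIdx s → ℝ)
    (p u : BasisIdx s) (Y Z : BasisIdx s → ℝ) :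
    ext F (Pi.single p 1) Y Z (Pi.single u 1) = ∑ q, ∑ r, Y q * Z r * F p q r u := by
  unfold ext
  rw [Finset.sum_eq_single p]
  · simp only [Pi.single_eq_same, one_mul]
    refine Finset.sum_congr rfl fun q _ => Finset.sum_congr rfl fun r _ => ?_
    rw [Finset.sum_eq_single u]
    · simp only [Pi.single_eq_same, mul_one]
    · intro t _ ht; simp [Pi.single_apply, ht]
    · simp
  · intro p' _ hp'; simp [Pi.single_apply, hp']
  · simp

lemma ext_V_zero (a : Fin s) (Y Z w : BasisIdx s → ℝ) :
    ext (bigR (fun _ _ _ _ => (0:ℝ)) (R2const s)) (Vvec a) Y Z w = 0 := by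
  unfold ext Vvec
  refine Finset.sum_eq_zero fun p _ => ?_
  by_cases hp : p = (1, a)
  · subst hp
    refine Finset.sum_eq_zero fun q _ => Finset.sum_eq_zero fun r _ =>
      Finset.sum_eq_zero fun u _ => ?_
    simp [bigR]
  · simp [Pi.single_apply, hp]

lemma ext_T (a i1 : Fin s) (X : BasisIdx s → ℝ)
    (hX0 : ∀ b, X ((0 : Fin 3), b) = if b = i1 then 1 else 0) (u : BasisIdx s) :
    ext (bigR (fun _ _ _ _ => (0:ℝ)) (R2const s)) (Tvec a) X X (Pi.single u 1) =
      if u.1 = 0 then R2const s a i1 i1 u.2 else 0 := by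
  obtain ⟨k, d⟩ := u
  show ext _ (Pi.single ((2:Fin 3), a) 1) X X (Pi.single (k, d) 1) = _
  rw [ext_single_single]
  fin_cases k <;>
  · simp only [Fintype.sum_prod_type, Fin.sum_univ_three]
    simp [bigR, hX0, ite_mul, mul_ite, Finset.sum_ite_eq, Finset.sum_ite_eq', R2const]

/-- for the curvature tensor of Lemma 2.1 with `R¹ = 0` and `R²`
of constant sectional curvature `+1`, and a spacelike unit vector `X` whose
`U`-component has been reduced to `u_1 = 1`, `u_a = 0` for `a > 1`, the kernel
of `J(X)` is `Span{X, V_1, ..., V_s, T_1}`, of dimension `s + 2`, while the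
image of `J(X)` is `Span{C_{2b}V_b - T_2, ..., C_{sb}V_b - T_s, V_2, ..., V_s}`,
of dimension `2(s-1)`.  Here `i1` denotes the first index. -/
theorem stmt16 (s : ℕ) (hs : 2 ≤ s) (i1 : Fin s) (hi1 : (i1 : ℕ) = 0)
    (gm : Fin s → Fin s → ℝ) (hgm : ∀ a b, gm a b = gm b a)
    (v t : Fin s → ℝ) (X : BasisIdx s → ℝ)
    (hXdef : X = Uvec i1 + (∑ a, v a • Vvec a) + (∑ a, t a • Tvec a))
    (hX : gBil gm X X = 1)
    (J : Module.End ℝ (BasisIdx s → ℝ))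
    (hJ : ∀ y z, gBil gm (J y) z =
        ext (bigR (fun _ _ _ _ => 0) (R2const s)) y X X z)
    (C : Fin s → Fin s → ℝ)
    (hC : ∀ a, J (Uvec a) =
        (∑ b, C a b • Vvec b) - ∑ b, R2const s a i1 i1 b • Tvec b) :
    LinearMap.ker J =
      Submodule.span ℝ ({X} ∪ Set.range (fun a : Fin s => Vvec a) ∪ {Tvec i1}) ∧
    Module.finrank ℝ (LinearMap.ker J) = s + 2 ∧
    LinearMap.range J =
      Submodule.span ℝ
        ({w | ∃ a : Fin s, a ≠ i1 ∧ w = (∑ b, C a b • Vvec b) - Tvec a} ∪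
          {w | ∃ a : Fin s, a ≠ i1 ∧ w = Vvec a}) ∧
    Module.finrank ℝ (LinearMap.range J) = 2 * (s - 1) := by
  classical
  have hX0 : ∀ b, X ((0:Fin 3), b) = if b = i1 then 1 else 0 := by
    intro b
    simp [hXdef, Uvec, Vvec, Tvec, Finset.sum_apply, Pi.single_apply, Prod.ext_iff]
  have hX1 : ∀ b, X ((1:Fin 3), b) = v b := by
    intro b
    simp [hXdef, Uvec, Vvec, Tvec, Finset.sum_apply, Pi.single_apply, Prod.ext_iff]
  have hX2 : ∀ b, X ((2:Fin 3), b) = t b := by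
    intro b
    simp [hXdef, Uvec, Vvec, Tvec, Finset.sum_apply, Pi.single_apply, Prod.ext_iff]
  have hgB0 : ∀ z : BasisIdx s → ℝ, gBil gm (0 : BasisIdx s → ℝ) z = 0 := by
    intro z; simp [gBil]
  have hJV : ∀ a, J (Vvec a) = 0 := by
    intro a
    refine eq_of_gBil gm _ _ (fun d => ?_) (fun d => ?_) (fun d => ?_) <;>
      rw [hJ, ext_V_zero, hgB0]
  have hJX : J X = 0 := by
    refine eq_of_gBil gm _ _ (fun d => ?_) (fun d => ?_) (fun d => ?_) <;>
      rw [hJ, ext_XX_zero, hgB0]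
  have hJT : ∀ a, J (Tvec a) = Vvec a - (if a = i1 then (1:ℝ) else 0) • Vvec i1 := by
    intro a
    refine eq_of_gBil gm _ _ (fun d => ?_) (fun d => ?_) (fun d => ?_)
    · rw [hJ, gBilU, show Uvec d = Pi.single ((0:Fin 3), d) (1:ℝ) from rfl,
        ext_T a i1 X hX0]
      simp only [R2const, Vvec, Pi.sub_apply, Pi.smul_apply, Pi.single_apply, Prod.mk.injEq]
      norm_num
      simp only [eq_comm]
    · rw [hJ, gBilV, show Vvec d = Pi.single ((1:Fin 3), d) (1:ℝ) from rfl,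
        ext_T a i1 X hX0]
      simp [Vvec, Pi.single_apply, Prod.ext_iff]
      split_ifs <;> simp [Pi.single_apply, Prod.ext_iff]
    · rw [hJ, gBilT, show Tvec d = Pi.single ((2:Fin 3), d) (1:ℝ) from rfl,
        ext_T a i1 X hX0]
      simp [Vvec, Pi.single_apply, Prod.ext_iff]
      split_ifs <;> simp [Pi.single_apply, Prod.ext_iff]
  have hJTi1 : J (Tvec i1) = 0 := by rw [hJT i1]; simp
  have hJTne : ∀ a, a ≠ i1 → J (Tvec a) = Vvec a := by
    intro a ha; rw [hJT a]; simp [ha]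
  have hR2T : ∀ a, a ≠ i1 → (∑ b, R2const s a i1 i1 b • Tvec b) = Tvec a := by
    intro a ha
    have h : ∀ b, R2const s a i1 i1 b = if b = a then (1:ℝ) else 0 := by
      intro b; simp [R2const, ha, eq_comm]
    simp only [h, ite_smul, one_smul, zero_smul, Finset.sum_ite_eq']
    simp
  -- kernel family
  set fK : (Fin s ⊕ Fin 2) → (BasisIdx s → ℝ) :=
    Sum.elim Vvec (![X, Tvec i1]) with hfK
  have hfK0 : fK (Sum.inr 0) = X := rfl
  have hfK1 : fK (Sum.inr 1) = Tvec i1 := rfl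
  have hfKl : ∀ a, fK (Sum.inl a) = Vvec a := fun a => rfl
  have hindK : LinearIndependent ℝ fK := by
    rw [Fintype.linearIndependent_iff]
    intro g hg
    have h0 : g (Sum.inr 0) = 0 := by
      have h := congrFun hg ((0:Fin 3), i1)
      simpa [hfK, Fintype.sum_sum_type, Fin.sum_univ_two, Finset.sum_apply,
        Vvec, Tvec, Pi.single_apply, Prod.ext_iff, hX0] using h
    have h1 : g (Sum.inr 1) = 0 := by
      have h := congrFun hg ((2:Fin 3), i1)
      simp [hfK, Fintype.sum_sum_type, Fin.sum_univ_two, Finset.sum_apply,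
        Vvec, Tvec, Pi.single_apply, Prod.ext_iff, hX2, h0] at h
      exact h
    have h2 : ∀ a, g (Sum.inl a) = 0 := by
      intro a
      have h := congrFun hg ((1:Fin 3), a)
      simp [hfK, Fintype.sum_sum_type, Fin.sum_univ_two, Finset.sum_apply,
        Vvec, Tvec, Pi.single_apply, Prod.ext_iff, hX1, h0, h1,
        Finset.sum_ite_eq, Finset.sum_ite_eq'] at h
      exact h
    intro i
    rcases i with a | j
    · exact h2 a
    · fin_cases j
      · exact h0
      · exact h1
  have hspanK : Submodule.span ℝ
      (({X} ∪ Set.range (fun a : Fin s => Vvec a) ∪ {Tvec i1}) : Set (BasisIdx s → ℝ))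
      = Submodule.span ℝ (Set.range fK) := by
    apply le_antisymm
    · rw [Submodule.span_le]
      rintro w ((rfl | ⟨a, rfl⟩) | rfl)
      · exact Submodule.subset_span ⟨Sum.inr 0, rfl⟩
      · exact Submodule.subset_span ⟨Sum.inl a, rfl⟩
      · exact Submodule.subset_span ⟨Sum.inr 1, rfl⟩
    · rw [Submodule.span_le]
      rintro w ⟨i, rfl⟩
      rcases i with a | j
      · exact Submodule.subset_span (Or.inl (Or.inr ⟨a, rfl⟩))
      · fin_cases j
        · exact Submodule.subset_span (Or.inl (Or.inl rfl))
        · exact Submodule.subset_span (Or.inr rfl)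
  have hKle : Submodule.span ℝ
      (({X} ∪ Set.range (fun a : Fin s => Vvec a) ∪ {Tvec i1}) : Set (BasisIdx s → ℝ))
      ≤ LinearMap.ker J := by
    rw [Submodule.span_le]
    rintro w ((rfl | ⟨a, rfl⟩) | rfl)
    · exact LinearMap.mem_ker.2 hJX
    · exact LinearMap.mem_ker.2 (hJV a)
    · exact LinearMap.mem_ker.2 hJTi1
  have hfinK : Module.finrank ℝ (Submodule.span ℝ
      (({X} ∪ Set.range (fun a : Fin s => Vvec a) ∪ {Tvec i1}) : Set (BasisIdx s → ℝ)))
      = s + 2 := by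
    rw [hspanK, finrank_span_eq_card hindK]
    simp
  -- image family
  set fI : ({a : Fin s // a ≠ i1} ⊕ {a : Fin s // a ≠ i1}) → (BasisIdx s → ℝ) :=
    Sum.elim (fun a => (∑ b, C (a : Fin s) b • Vvec b) - Tvec (a : Fin s))
      (fun a => Vvec (a : Fin s)) with hfI
  have hindI : LinearIndependent ℝ fI := by
    rw [Fintype.linearIndependent_iff]
    intro g hg
    have hA : ∀ a : {a : Fin s // a ≠ i1}, g (Sum.inl a) = 0 := by
      intro a
      have h := congrFun hg ((2:Fin 3), (a : Fin s))
      simp [hfI, Fintype.sum_sum_type, Finset.sum_apply, Vvec, Tvec,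
        Pi.single_apply, Prod.ext_iff, Subtype.coe_inj,
        Finset.sum_ite_eq, Finset.sum_ite_eq'] at h
      exact h
    have hB : ∀ a : {a : Fin s // a ≠ i1}, g (Sum.inr a) = 0 := by
      intro a
      have h := congrFun hg ((1:Fin 3), (a : Fin s))
      simp [hfI, Fintype.sum_sum_type, Finset.sum_apply, Vvec, Tvec,
        Pi.single_apply, Prod.ext_iff, Subtype.coe_inj, hA,
        Finset.sum_ite_eq, Finset.sum_ite_eq'] at h
      exact h
    intro i
    rcases i with a | a
    · exact hA a
    · exact hB a
  have hcardne : Fintype.card {a : Fin s // a ≠ i1} = s - 1 := by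
    simp [Fintype.card_subtype_compl]
  have hspanI : Submodule.span ℝ
      (({w | ∃ a : Fin s, a ≠ i1 ∧ w = (∑ b, C a b • Vvec b) - Tvec a} ∪
        {w | ∃ a : Fin s, a ≠ i1 ∧ w = Vvec a}) : Set (BasisIdx s → ℝ))
      = Submodule.span ℝ (Set.range fI) := by
    apply le_antisymm
    · rw [Submodule.span_le]
      rintro w (⟨a, ha, rfl⟩ | ⟨a, ha, rfl⟩)
      · exact Submodule.subset_span ⟨Sum.inl ⟨a, ha⟩, rfl⟩
      · exact Submodule.subset_span ⟨Sum.inr ⟨a, ha⟩, rfl⟩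
    · rw [Submodule.span_le]
      rintro w ⟨i, rfl⟩
      rcases i with ⟨a, ha⟩ | ⟨a, ha⟩
      · exact Submodule.subset_span (Or.inl ⟨a, ha, rfl⟩)
      · exact Submodule.subset_span (Or.inr ⟨a, ha, rfl⟩)
  have hIle : Submodule.span ℝ
      (({w | ∃ a : Fin s, a ≠ i1 ∧ w = (∑ b, C a b • Vvec b) - Tvec a} ∪
        {w | ∃ a : Fin s, a ≠ i1 ∧ w = Vvec a}) : Set (BasisIdx s → ℝ))
      ≤ LinearMap.range J := by
    rw [Submodule.span_le]
    rintro w (⟨a, ha, rfl⟩ | ⟨a, ha, rfl⟩)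
    · exact ⟨Uvec a, by rw [hC a, hR2T a ha]⟩
    · exact ⟨Tvec a, hJTne a ha⟩
  have hfinI : Module.finrank ℝ (Submodule.span ℝ
      (({w | ∃ a : Fin s, a ≠ i1 ∧ w = (∑ b, C a b • Vvec b) - Tvec a} ∪
        {w | ∃ a : Fin s, a ≠ i1 ∧ w = Vvec a}) : Set (BasisIdx s → ℝ)))
      = 2 * (s - 1) := by
    rw [hspanI, finrank_span_eq_card hindI, Fintype.card_sum, hcardne]
    omega
  -- rank-nullity
  have hrn : Module.finrank ℝ (LinearMap.range J) + Module.finrank ℝ (LinearMap.ker J)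
      = 3 * s := by
    rw [LinearMap.finrank_range_add_finrank_ker, Module.finrank_pi]
    simp [BasisIdx, Fintype.card_prod]
  have hk1 : s + 2 ≤ Module.finrank ℝ (LinearMap.ker J) := by
    rw [← hfinK]; exact Submodule.finrank_mono hKle
  have hk2 : 2 * (s - 1) ≤ Module.finrank ℝ (LinearMap.range J) := by
    rw [← hfinI]; exact Submodule.finrank_mono hIle
  have hkeq : Module.finrank ℝ (LinearMap.ker J) = s + 2 := by omega
  have hreq : Module.finrank ℝ (LinearMap.range J) = 2 * (s - 1) := by omega
  refine ⟨?_, hkeq, ?_, hreq⟩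
  · exact (Submodule.eq_of_le_of_finrank_le hKle (by rw [hfinK, hkeq])).symm
  · exact (Submodule.eq_of_le_of_finrank_le hIle (by rw [hfinI, hreq])).symm
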